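/- Let c > 1 and define f'(ρ) = ln((1+ρ)/(1-ρ)) - 2cρ for ρ ∈ (-1,1). Then f' has exactly three zeros in (-1,1): ρ = 0 and ±ρ_c for some ρ_c ∈ (0,1), i.e., the associated potential is a double well. -/

import Mathlib

noncomputable def gfun (c : ℝ) : ℝ → ℝ :=
  fun x => Real.log (1 + x) - Real.log (1 - x) - 2 * c * x

lemma gfun_deriv (c : ℝ) {x : ℝ} (hx : x ∈ Set.Ioo (-1:ℝ) 1) :
    HasDerivAt (gfun c) (1/(1+x) + 1/(1-x) - 2*c) x := by
  have h1 : (0:ℝ) < 1 + x := by linarith [hx.1]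
  have h2 : (0:ℝ) < 1 - x := by linarith [hx.2]
  have d1 : HasDerivAt (fun x : ℝ => Real.log (1+x)) (1/(1+x)) x := by
    have h : HasDerivAt (fun x : ℝ => 1 + x) 1 x := (hasDerivAt_id x).const_add 1
    simpa using h.log h1.ne'
  have d2 : HasDerivAt (fun x : ℝ => Real.log (1-x)) (-(1/(1-x))) x := by
    have h : HasDerivAt (fun x : ℝ => 1 - x) (-1) x := (hasDerivAt_id x).const_sub 1
    have := h.log h2.ne'
    convert this using 1
    field_simp
  have d3 : HasDerivAt (fun x : ℝ => 2*c*x) (2*c) x := by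
    simpa using (hasDerivAt_id x).const_mul (2*c)
  have := (d1.sub d2).sub d3
  exact this.congr_deriv (by ring)

lemma gfun_odd (c : ℝ) (x : ℝ) : gfun c (-x) = - gfun c x := by
  unfold gfun
  have e1 : (1 : ℝ) + -x = 1 - x := by ring
  have e2 : (1 : ℝ) - -x = 1 + x := by ring
  rw [e1, e2]; ring

lemma gfun_zero (c : ℝ) : gfun c 0 = 0 := by simp [gfun]

theorem stmt_11 (c : ℝ) (hc : 1 < c) (f' : ℝ → ℝ)
    (hf' : ∀ ρ ∈ Set.Ioo (-1:ℝ) 1, f' ρ = Real.log ((1 + ρ) / (1 - ρ)) - 2 * c * ρ) :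
    ∃ ρc ∈ Set.Ioo (0:ℝ) 1,
      {ρ ∈ Set.Ioo (-1:ℝ) 1 | f' ρ = 0} = {-ρc, 0, ρc} := by
  have hc0 : (0:ℝ) < c := by linarith
  -- f' agrees with gfun on Ioo
  have hfg : ∀ x ∈ Set.Ioo (-1:ℝ) 1, f' x = gfun c x := by
    intro x hx
    have h1 : (0:ℝ) < 1 + x := by linarith [hx.1]
    have h2 : (0:ℝ) < 1 - x := by linarith [hx.2]
    rw [hf' x hx, Real.log_div h1.ne' h2.ne']
    rfl
  set ρs : ℝ := Real.sqrt ((c-1)/c) with hρs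
  have hq0 : (0:ℝ) < (c-1)/c := div_pos (by linarith) hc0
  have hρs_pos : 0 < ρs := Real.sqrt_pos.mpr hq0
  have hρs_sq : ρs^2 = (c-1)/c := Real.sq_sqrt hq0.le
  have hρs_lt1 : ρs < 1 := by
    rw [hρs, show ρs < 1 ↔ (c-1)/c < 1^2 from Real.sqrt_lt' one_pos, one_pow, div_lt_one hc0]
    linarith
  -- strict anti on [0, ρs]
  have hanti : StrictAntiOn (gfun c) (Set.Icc 0 ρs) := by
    apply strictAntiOn_of_deriv_neg (convex_Icc _ _)
    · intro x hx
      have hx' : x ∈ Set.Ioo (-1:ℝ) 1 := ⟨by linarith [hx.1], by linarith [hx.2]⟩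
      exact (gfun_deriv c hx').continuousAt.continuousWithinAt
    · intro x hx
      rw [interior_Icc] at hx
      have hx' : x ∈ Set.Ioo (-1:ℝ) 1 := ⟨by linarith [hx.1], by linarith [hx.2]⟩
      rw [(gfun_deriv c hx').deriv]
      have h1 : (0:ℝ) < 1 + x := by linarith [hx'.1]
      have h2 : (0:ℝ) < 1 - x := by linarith [hx'.2]
      have hx2 : x^2 < (c-1)/c := by nlinarith [hx.1, hx.2, hρs_sq, hρs_pos]
      have hcx : x^2 * c < c - 1 := (lt_div_iff₀ hc0).mp hx2
      rw [div_add_div _ _ h1.ne' h2.ne', sub_neg, div_lt_iff₀ (mul_pos h1 h2)]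
      nlinarith
  -- strict mono on [ρs, 1)
  have hmono : StrictMonoOn (gfun c) (Set.Ico ρs 1) := by
    apply strictMonoOn_of_deriv_pos (convex_Ico _ _)
    · intro x hx
      have hx' : x ∈ Set.Ioo (-1:ℝ) 1 := ⟨by linarith [hx.1, hρs_pos], hx.2⟩
      exact (gfun_deriv c hx').continuousAt.continuousWithinAt
    · intro x hx
      rw [interior_Ico] at hx
      have hx' : x ∈ Set.Ioo (-1:ℝ) 1 := ⟨by linarith [hx.1, hρs_pos], hx.2⟩
      rw [(gfun_deriv c hx').deriv]
      have h1 : (0:ℝ) < 1 + x := by linarith [hx'.1]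
      have h2 : (0:ℝ) < 1 - x := by linarith [hx'.2]
      have hx2 : (c-1)/c < x^2 := by nlinarith [hx.1, hρs_sq, hρs_pos]
      have hcx : c - 1 < x^2 * c := (div_lt_iff₀ hc0).mp hx2
      rw [div_add_div _ _ h1.ne' h2.ne', sub_pos, lt_div_iff₀ (mul_pos h1 h2)]
      nlinarith
  -- negativity on (0, ρs]
  have hneg : ∀ x ∈ Set.Ioc (0:ℝ) ρs, gfun c x < 0 := by
    intro x hx
    have := hanti (Set.left_mem_Icc.mpr hρs_pos.le) ⟨hx.1.le, hx.2⟩ hx.1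
    rwa [gfun_zero] at this
  -- the point y near 1 where gfun > 0
  set y : ℝ := (Real.exp (2*c) - 1)/(Real.exp (2*c) + 1) with hy
  have he1 : (1:ℝ) < Real.exp (2*c) := by
    rw [show (1:ℝ) = Real.exp 0 by simp]
    exact Real.exp_lt_exp.mpr (by linarith)
  have hed : (0:ℝ) < Real.exp (2*c) + 1 := by linarith
  have hy_pos : 0 < y := div_pos (by linarith) hed
  have hy_lt1 : y < 1 := by rw [hy, div_lt_one hed]; linarith
  have h1y : (0:ℝ) < 1 + y := by linarith
  have h2y : (0:ℝ) < 1 - y := by linarith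
  have hgy : gfun c y = 2*c*(1-y) := by
    unfold gfun
    rw [← Real.log_div h1y.ne' h2y.ne']
    have : (1+y)/(1-y) = Real.exp (2*c) := by
      rw [hy]; field_simp; ring
    rw [this, Real.log_exp]; ring
  have hgy_pos : 0 < gfun c y := by
    rw [hgy]; positivity
  have hρsy : ρs < y := by
    by_contra h
    push_neg at h
    exact absurd (hneg y ⟨hy_pos, h⟩) (by linarith)
  have hgρs : gfun c ρs < 0 := hneg ρs ⟨hρs_pos, le_refl _⟩
  -- IVT to get ρc
  have hcont : ContinuousOn (gfun c) (Set.Icc ρs y) := by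
    intro x hx
    have hx' : x ∈ Set.Ioo (-1:ℝ) 1 :=
      ⟨by linarith [hx.1, hρs_pos], by linarith [hx.2, hy_lt1]⟩
    exact (gfun_deriv c hx').continuousAt.continuousWithinAt
  obtain ⟨ρc, hρc_mem, hρc_zero⟩ :=
    intermediate_value_Ioo hρsy.le hcont (Set.mem_Ioo.mpr ⟨hgρs, hgy_pos⟩)
  have hρc0 : 0 < ρc := lt_trans hρs_pos hρc_mem.1
  have hρc1 : ρc < 1 := lt_trans hρc_mem.2 hy_lt1
  refine ⟨ρc, ⟨hρc0, hρc1⟩, ?_⟩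
  -- uniqueness of positive zero
  have huniq : ∀ x ∈ Set.Ioo (0:ℝ) 1, gfun c x = 0 → x = ρc := by
    intro x hx hgx
    have hxρs : ρs < x := by
      by_contra h
      push_neg at h
      exact absurd (hneg x ⟨hx.1, h⟩) (by rw [hgx]; exact lt_irrefl 0)
    have hxm : x ∈ Set.Ico ρs 1 := ⟨hxρs.le, hx.2⟩
    have hρcm : ρc ∈ Set.Ico ρs 1 := ⟨hρc_mem.1.le, hρc1⟩
    exact hmono.injOn hxm hρcm (by rw [hgx, hρc_zero])
  ext x
  simp only [Set.mem_setOf_eq, Set.mem_insert_iff, Set.mem_singleton_iff]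
  constructor
  · rintro ⟨hx, hfx⟩
    rw [hfg x hx] at hfx
    rcases lt_trichotomy x 0 with h | h | h
    · left
      have hnx : -x ∈ Set.Ioo (0:ℝ) 1 := ⟨by linarith, by linarith [hx.1]⟩
      have : gfun c (-x) = 0 := by rw [gfun_odd, hfx, neg_zero]
      have := huniq (-x) hnx this
      linarith [this]
    · right; left; exact h
    · right; right; exact huniq x ⟨h, hx.2⟩ hfx
  · rintro (h | h | h) <;> subst h
    · refine ⟨⟨by linarith, by linarith⟩, ?_⟩
      rw [hfg _ ⟨by linarith, by linarith⟩, gfun_odd, hρc_zero, neg_zero]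
    · exact ⟨⟨by linarith, by linarith⟩, by rw [hfg _ ⟨by linarith, by linarith⟩, gfun_zero]⟩
    · exact ⟨⟨by linarith, by linarith⟩, by rw [hfg _ ⟨by linarith, by linarith⟩, hρc_zero]⟩
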